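/- Let L > 0, C > 0 and ψ̃I > 0 be real numbers and let ψ̃V, ω̃, Y, δ be real numbers. Suppose Int, ia, v : ℝ → ℝ are differentiable functions and u : ℝ → ℝ is a function such that for all t: L·Int'(t) = ω̃·v(t), L·ia'(t) = −Int(t) − ψ̃I·ia(t) − ψ̃V·v(t), and C·v'(t) = ia(t) + (Y − δ)·v(t) + u(t). If u(t) = 0 for all t and v(t) = 0 for all t, then ia(t) = 0 for all t and Int(t) = 0 for all t. (The controlled voltage-setting bus is zero-state observable.) -/
import Mathlib

/-- Zero-state observability of the controlled voltage-setting bus: zero input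
and zero output (voltage) for all time force all states to be identically zero. -/
theorem voltage_setting_bus_ZSO
    (L C ψI ψV ω Y δ : ℝ) (hL : 0 < L) (hC : 0 < C) (hψI : 0 < ψI)
    (Int ia v : ℝ → ℝ) (u : ℝ → ℝ)
    (hInt : Differentiable ℝ Int) (hia : Differentiable ℝ ia) (hv : Differentiable ℝ v)
    (heq1 : ∀ t, L * deriv Int t = ω * v t)
    (heq2 : ∀ t, L * deriv ia t = -Int t - ψI * ia t - ψV * v t)
    (heq3 : ∀ t, C * deriv v t = ia t + (Y - δ) * v t + u t)
    (hu : ∀ t, u t = 0) (hvz : ∀ t, v t = 0) :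
    (∀ t, ia t = 0) ∧ (∀ t, Int t = 0) := by
  have hvf : v = fun _ => (0 : ℝ) := funext hvz
  have hdv : ∀ t, deriv v t = 0 := by
    intro t; rw [hvf]; simp
  have hiaz : ∀ t, ia t = 0 := by
    intro t
    have := heq3 t
    rw [hdv, hu, hvz] at this
    linarith
  have hiaf : ia = fun _ => (0 : ℝ) := funext hiaz
  have hdia : ∀ t, deriv ia t = 0 := by
    intro t; rw [hiaf]; simp
  refine ⟨hiaz, fun t => ?_⟩
  have := heq2 t
  rw [hdia, hiaz, hvz] at this
  linarith
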